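/- Let k be a natural number and let q ∈ ℂ with q ≠ 0 and q^{k+4} = −1. Let t ∈ ℤ be such that q^{2t} ≠ q^{k+2} and q^{k+2t+6} ≠ 1. Then [ ((q²−1)(q^{k+2}−1)·q^{k+4}) / (q^{2t} − q^{k+2}) − ((q²−1)(q^{k+6}−1)) / (q^{k+2t+6} − 1) + q^{k+4} + 2q^{k+6} − 2q⁴ − 1 ] / ( q²·(q^{k+4} − 1) ) = 1 + q² + q^{−2}. -/

import Mathlib

/-- The scalar identity verifying relation (R1) at a split vertex of the
orbifold graph Γ^{4,k,ℤ₄*}. -/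
theorem orbifold_R1_split_vertex (k : ℕ) (q : ℂ) (hq : q ≠ 0)
    (hk : q ^ (k + 4) = -1) (t : ℤ)
    (h1 : q ^ (2 * t) ≠ q ^ ((k : ℤ) + 2))
    (h2 : q ^ ((k : ℤ) + 2 * t + 6) ≠ 1) :
    (((q ^ 2 - 1) * (q ^ (k + 2) - 1) * q ^ (k + 4)) /
          (q ^ (2 * t) - q ^ ((k : ℤ) + 2))
        - ((q ^ 2 - 1) * (q ^ (k + 6) - 1)) / (q ^ ((k : ℤ) + 2 * t + 6) - 1)
        + q ^ (k + 4) + 2 * q ^ (k + 6) - 2 * q ^ 4 - 1) /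
      (q ^ 2 * (q ^ (k + 4) - 1))
    = 1 + q ^ 2 + q ^ (-2 : ℤ) := by
  have hq2 : (q : ℂ) ^ 2 ≠ 0 := pow_ne_zero _ hq
  have e1 : q ^ (k + 2) * q ^ 2 = -1 := by rw [← pow_add]; exact hk
  have hk2 : q ^ (k + 2) = -(q ^ 2)⁻¹ := by
    rw [show -(q ^ 2)⁻¹ = (-1) / q ^ 2 by ring, eq_div_iff hq2]
    exact e1
  have hk6 : q ^ (k + 6) = -q ^ 2 := by
    have h : q ^ (k + 6) = q ^ (k + 4) * q ^ 2 := by rw [← pow_add]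
    rw [h, hk]; ring
  have hz2 : q ^ ((k : ℤ) + 2) = -(q ^ 2)⁻¹ := by
    have h : ((k : ℤ) + 2) = ((k + 2 : ℕ) : ℤ) := by push_cast; ring
    rw [h, zpow_natCast, hk2]
  have hz3 : q ^ ((k : ℤ) + 2 * t + 6) = -q ^ 2 * q ^ (2 * t) := by
    have h : ((k : ℤ) + 2 * t + 6) = ((k + 6 : ℕ) : ℤ) + 2 * t := by push_cast; ring
    rw [h, zpow_add₀ hq, zpow_natCast, hk6]
  have hneg2 : q ^ (-2 : ℤ) = (q ^ 2)⁻¹ := by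
    rw [zpow_neg, zpow_two, sq]
  set s := q ^ (2 * t) with hs_def
  have hs : s ≠ 0 := zpow_ne_zero _ hq
  -- the common denominator
  have hw : q ^ 2 * s + 1 ≠ 0 := by
    intro h
    apply h2
    rw [hz3]
    linear_combination -h
  have e_d1 : s - q ^ ((k : ℤ) + 2) = (q ^ 2)⁻¹ * (q ^ 2 * s + 1) := by
    rw [hz2]; field_simp; ring
  have e_d2 : q ^ ((k : ℤ) + 2 * t + 6) - 1 = -(q ^ 2 * s + 1) := by
    rw [hz3]; ring
  rw [e_d1, e_d2, hk, hk2, hk6, hneg2]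
  rw [div_eq_iff (by intro h; rcases mul_eq_zero.mp h with h | h
                     · exact hq2 h
                     · norm_num at h : q ^ 2 * ((-1 : ℂ) - 1) ≠ 0)]
  have hw' : (-1 : ℂ) - q ^ 2 * s ≠ 0 := by
    intro h; exact hw (by linear_combination -h)
  field_simp [hw']
  ring
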